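/- Let R be a reduced one-dimensional standard graded Cohen–Macaulay k-algebra with a-invariant a, K its total ring of quotients, S the integral closure of R in K, and y a linear parameter. Then 𝔪^{a+1} = (y^{a+1}) :_R ((y^{a+1}) :_R 𝔪^{a+1}). -/

import Mathlib

open DirectSum

section Aux

variable {k R : Type*} [Field k] [CommRing R] [Algebra k R]
variable (𝒜 : ℤ → Submodule k R) [GradedAlgebra 𝒜]

/-- Key convolution fact: if the homogeneous components of `x` vanish below `m` and those of
`z` vanish below `n`, then those of `x * z` vanish below `m + n`. -/
theorem proj_mul_eq_zero_aux {m n e : ℤ} (he : e < m + n) {x z : R}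
    (hx : ∀ i : ℤ, i < m → GradedRing.proj 𝒜 i x = 0)
    (hz : ∀ j : ℤ, j < n → GradedRing.proj 𝒜 j z = 0) :
    GradedRing.proj 𝒜 e (x * z) = 0 := by
  classical
  have hxsum := DirectSum.sum_support_decompose 𝒜 x
  have hmul : x * z
      = ∑ i ∈ (DirectSum.decompose 𝒜 x).support, (DirectSum.decompose 𝒜 x i : R) * z := by
    rw [← Finset.sum_mul, hxsum]
  rw [hmul, map_sum]
  apply Finset.sum_eq_zero
  intro i _
  by_cases him : i < m
  · have h0 : (DirectSum.decompose 𝒜 x i : R) = 0 := by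
      have := hx i him
      rwa [GradedRing.proj_apply] at this
    rw [h0, zero_mul, map_zero]
  · push_neg at him
    have hle : e - i < n := by omega
    have key : GradedRing.proj 𝒜 e ((DirectSum.decompose 𝒜 x i : R) * z)
        = (DirectSum.decompose 𝒜 x i : R) * GradedRing.proj 𝒜 (e - i) z := by
      have hkey := DirectSum.coe_decompose_mul_add_of_left_mem 𝒜 (b := z) (j := e - i)
        (SetLike.coe_mem ((DirectSum.decompose 𝒜 x) i))
      rw [show i + (e - i) = e from by ring] at hkey
      rw [GradedRing.proj_apply, GradedRing.proj_apply]
      exact hkey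
    rw [key, hz _ hle, mul_zero]

/-- The ideal of elements whose homogeneous components vanish in all degrees `< n`
(for a nonnegatively graded ring). -/
def lowIdeal (hneg : ∀ i : ℤ, i < 0 → 𝒜 i = ⊥) (n : ℤ) : Ideal R where
  carrier := {x | ∀ e : ℤ, e < n → GradedRing.proj 𝒜 e x = 0}
  zero_mem' := fun e _ => map_zero _
  add_mem' := fun ha hb e he => by rw [map_add, ha e he, hb e he, add_zero]
  smul_mem' := fun c x hx => by
    intro e he
    rw [smul_eq_mul]
    refine proj_mul_eq_zero_aux 𝒜 (m := 0) (n := n) (e := e) (by omega) (fun i hi => ?_) hx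
    rw [GradedRing.proj_apply]
    exact (Submodule.eq_bot_iff _).1 (hneg i hi) _ (SetLike.coe_mem _)

theorem mul_mem_lowIdeal (hneg : ∀ i : ℤ, i < 0 → 𝒜 i = ⊥) {m n : ℤ} {x z : R}
    (hx : x ∈ lowIdeal 𝒜 hneg m) (hz : z ∈ lowIdeal 𝒜 hneg n) :
    x * z ∈ lowIdeal 𝒜 hneg (m + n) :=
  fun e he => proj_mul_eq_zero_aux 𝒜 he hx hz

/-- colon of homogeneous ideals is homogeneous -/
theorem colon_isHomogeneous_aux {I J : Ideal R} (hI : I.IsHomogeneous 𝒜)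
    (hJ : J.IsHomogeneous 𝒜) : (Submodule.colon I J).IsHomogeneous 𝒜 := by
  classical
  intro i r hr
  refine Submodule.mem_colon.2 fun g hg => ?_
  rw [smul_eq_mul]
  have hgsum := DirectSum.sum_support_decompose 𝒜 g
  rw [← hgsum, Finset.mul_sum]
  apply Ideal.sum_mem
  intro e _
  have hge : (DirectSum.decompose 𝒜 g e : R) ∈ J := hJ e hg
  have h1 : r * (DirectSum.decompose 𝒜 g e : R) ∈ I := by
    have := Submodule.mem_colon.1 hr _ hge
    rwa [smul_eq_mul] at this
  have h2 := hI (i + e) h1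
  rwa [DirectSum.coe_decompose_mul_add_of_right_mem 𝒜 (SetLike.coe_mem _)] at h2

end Aux

/-- Integer power of an ideal; by convention nonpositive exponents give the unit ideal. -/
def ipow {R : Type*} [CommRing R] (I : Ideal R) (n : ℤ) : Ideal R := I ^ n.toNat

/-- **Proposition 2.6 (key step)**: Let `R` be a reduced one-dimensional standard graded
Cohen–Macaulay `k`-algebra with `a`-invariant `a` and `y` a linear parameter.  Then
`𝔪^(a+1) = (y^(a+1)) : ((y^(a+1)) : 𝔪^(a+1))`. -/
theorem statement_7
    {k R : Type*} [Field k] [CommRing R] [Algebra k R] [IsNoetherianRing R] [IsReduced R]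
    -- `R` is standard graded over `k`:
    (𝒜 : ℤ → Submodule k R) [GradedAlgebra 𝒜]
    (hneg : ∀ i : ℤ, i < 0 → 𝒜 i = ⊥)
    (hstd : ∀ i : ℤ, 0 ≤ i → 𝒜 (i + 1) = 𝒜 1 * 𝒜 i)
    -- of dimension one:
    (hdim : ringKrullDim R = 1)
    -- `𝔪` is the homogeneous maximal ideal:
    (𝔪 : Ideal R) (h𝔪 : 𝔪 = Ideal.span (𝒜 1 : Set R))
    -- `y` is a linear nonzerodivisor parameter (this encodes that `R` is Cohen–Macaulay):
    (y : R) (hy1 : y ∈ 𝒜 1) (hynzd : y ∈ nonZeroDivisors R)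
    (hsop : 𝔪 ≤ (Ideal.span {y}).radical)
    -- `a` is the `a`-invariant of `R`, characterized by the reduction number `r_(y)(𝔪) = a + 1`:
    (a : ℤ) (ha : 0 ≤ a + 1)
    (hred : ∀ n : ℤ, a + 1 ≤ n → ipow 𝔪 (n + 1) = Ideal.span {y} * ipow 𝔪 n)
    (hmin : ¬ ipow 𝔪 (a + 1) = Ideal.span {y} * ipow 𝔪 a) :
    ipow 𝔪 (a + 1) =
      Submodule.colon (Ideal.span {y ^ (a + 1).toNat})
        (Submodule.colon (Ideal.span {y ^ (a + 1).toNat}) (ipow 𝔪 (a + 1))) := by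
  classical
  set t : ℕ := (a + 1).toNat with ht
  have hta : (t : ℤ) = a + 1 := Int.toNat_of_nonneg ha
  have hipow : ipow 𝔪 (a + 1) = 𝔪 ^ t := rfl
  rw [hipow]
  set Q : Ideal R := Ideal.span {y ^ t} with hQ
  set J : Ideal R := Submodule.colon Q ((𝔪 ^ t : Ideal R) : Set R) with hJ
  -- membership in `J` via divisibility
  have hJmem : ∀ γ : R, γ ∈ J ↔ ∀ m ∈ 𝔪 ^ t, y ^ t ∣ γ * m := by
    intro γ
    simp only [hJ, Submodule.mem_colon, smul_eq_mul, hQ, Ideal.mem_span_singleton, SetLike.mem_coe]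
  have hJ'mem : ∀ x : R, x ∈ Submodule.colon Q J ↔ ∀ γ ∈ J, y ^ t ∣ x * γ := by
    intro x
    simp only [Submodule.mem_colon, smul_eq_mul, hQ, Ideal.mem_span_singleton, SetLike.mem_coe]
  -- cancellation
  have hynzdN : ∀ N : ℕ, (y : R) ^ N ∈ nonZeroDivisors R := fun N => pow_mem hynzd N
  have hcan : ∀ (N : ℕ) (u v : R), y ^ N * u = y ^ N * v → u = v := by
    intro N u v h
    exact (mul_cancel_left_mem_nonZeroDivisors (hynzdN N)).1 h
  -- `y ∈ 𝔪`
  have hy𝔪 : y ∈ 𝔪 := by rw [h𝔪]; exact Ideal.subset_span hy1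
  -- homogeneity facts
  have h𝔪hom : 𝔪.IsHomogeneous 𝒜 := by
    rw [h𝔪]; exact Ideal.homogeneous_span 𝒜 _ (fun x hx => ⟨1, hx⟩)
  have hpowhom : ∀ n : ℕ, (𝔪 ^ n).IsHomogeneous 𝒜 := by
    intro n
    induction n with
    | zero => simpa using Ideal.IsHomogeneous.top 𝒜
    | succ n ih => rw [pow_succ]; exact Ideal.IsHomogeneous.mul ih h𝔪hom
  have hyt𝒜 : ∀ N : ℕ, y ^ N ∈ 𝒜 (N : ℤ) := by
    intro N
    have := SetLike.pow_mem_graded N hy1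
    simpa using this
  have hQhom : Q.IsHomogeneous 𝒜 := by
    rw [hQ]
    exact Ideal.homogeneous_span 𝒜 _ (by rintro x rfl; exact ⟨(t : ℤ), hyt𝒜 t⟩)
  have hJhom : J.IsHomogeneous 𝒜 := colon_isHomogeneous_aux 𝒜 hQhom (hpowhom t)
  have hJ'hom : (Submodule.colon Q J).IsHomogeneous 𝒜 := colon_isHomogeneous_aux 𝒜 hQhom hJhom
  -- reduction : 𝔪^(t+k) = (y^k) 𝔪^t
  have hstep : ∀ s : ℕ, t ≤ s → 𝔪 ^ (s + 1) = Ideal.span {y} * 𝔪 ^ s := by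
    intro s hs
    have h1 := hred (s : ℤ) (by omega)
    have h2 : ((s : ℤ) + 1).toNat = s + 1 := by omega
    have h3 : ((s : ℤ)).toNat = s := by omega
    unfold ipow at h1
    rw [h2, h3] at h1
    exact h1
  have hPk : ∀ s : ℕ, 𝔪 ^ (t + s) = Ideal.span {y ^ s} * 𝔪 ^ t := by
    intro s
    induction s with
    | zero => simp
    | succ s ih =>
        have : t + (s + 1) = (t + s) + 1 := by omega
        rw [this, hstep (t + s) (by omega), ih, ← mul_assoc, pow_succ,
          Ideal.span_singleton_mul_span_singleton]
        ring_nf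
  -- elements of 𝔪^n live in degrees ≥ n
  have hlow : ∀ n : ℕ, 𝔪 ^ n ≤ lowIdeal 𝒜 hneg (n : ℤ) := by
    intro n
    induction n with
    | zero =>
        intro x _ e he
        rw [GradedRing.proj_apply]
        exact (Submodule.eq_bot_iff _).1 (hneg e (by omega)) _ (SetLike.coe_mem _)
    | succ n ih =>
        rw [pow_succ]
        refine Ideal.mul_le.2 fun u hu v hv => ?_
        have h𝔪low : 𝔪 ≤ lowIdeal 𝒜 hneg 1 := by
          rw [h𝔪]
          rw [Ideal.span_le]
          intro x hx e he
          rw [GradedRing.proj_apply]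
          rcases lt_or_ge e 0 with h | h
          · exact (Submodule.eq_bot_iff _).1 (hneg e h) _ (SetLike.coe_mem _)
          · have he0 : e = 0 := by omega
            subst he0
            rw [DirectSum.decompose_of_mem_ne 𝒜 hx (by norm_num)]
        have := mul_mem_lowIdeal 𝒜 hneg (ih hu) (h𝔪low hv)
        have hcast : ((n : ℤ) + 1) = ((n + 1 : ℕ) : ℤ) := by push_cast; ring
        rwa [hcast] at this
  -- 𝒜 d ⊆ 𝔪 ^ d
  have hAm : ∀ d : ℕ, ∀ x ∈ 𝒜 (d : ℤ), x ∈ 𝔪 ^ d := by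
    intro d
    induction d with
    | zero => intro x _; simp
    | succ d ih =>
        intro x hx
        have hcast : ((d + 1 : ℕ) : ℤ) = (d : ℤ) + 1 := by push_cast; ring
        rw [hcast, hstd (d : ℤ) (by omega)] at hx
        have hx' : x ∈ 𝒜 1 * 𝒜 (d : ℤ) := hx
        have hle : (𝒜 1 * 𝒜 (d : ℤ) : Submodule k R) ≤
            Submodule.restrictScalars k (𝔪 ^ (d + 1)) := by
          rw [Submodule.mul_le]
          intro u hu v hv
          have h1 : u ∈ 𝔪 := by rw [h𝔪]; exact Ideal.subset_span hu
          have h2 : v ∈ 𝔪 ^ d := ih v hv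
          have : u * v ∈ 𝔪 * 𝔪 ^ d := Ideal.mul_mem_mul h1 h2
          rwa [← pow_succ'] at this
        exact hle hx'
  -- Lemma A : J · 𝔪^t ⊆ y^t J
  have hLA : ∀ γ ∈ J, ∀ m ∈ 𝔪 ^ t, ∃ w ∈ J, γ * m = y ^ t * w := by
    intro γ hγ m hm
    obtain ⟨w, hw⟩ := (hJmem γ).1 hγ m hm
    refine ⟨w, ?_, hw⟩
    rw [hJmem]
    intro m' hm'
    have hmm' : m * m' ∈ Ideal.span {y ^ t} * 𝔪 ^ t := by
      rw [← hPk t, pow_add]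
      exact Ideal.mul_mem_mul hm hm'
    obtain ⟨μ, hμ, hμeq⟩ := Ideal.mem_span_singleton_mul.1 hmm'
    obtain ⟨ρ, hρ⟩ := (hJmem γ).1 hγ μ hμ
    refine ⟨ρ, hcan t _ _ ?_⟩
    calc y ^ t * (w * m') = (γ * m) * m' := by rw [hw]; ring
      _ = γ * (m * m') := by ring
      _ = γ * (y ^ t * μ) := by rw [hμeq]
      _ = y ^ t * (γ * μ) := by ring
      _ = y ^ t * (y ^ t * ρ) := by rw [hρ]
  -- Lemma B : u J ⊆ (y^N) → u J ⊆ y^N J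
  have hLB : ∀ (N : ℕ) (u : R), (∀ γ ∈ J, y ^ N ∣ u * γ) →
      ∀ γ ∈ J, ∃ w ∈ J, u * γ = y ^ N * w := by
    intro N u hu γ hγ
    obtain ⟨w, hw⟩ := hu γ hγ
    refine ⟨w, ?_, hw⟩
    rw [hJmem]
    intro m hm
    obtain ⟨w', hw', hw'eq⟩ := hLA γ hγ m hm
    obtain ⟨ρ, hρ⟩ := hu w' hw'
    refine ⟨ρ, hcan N _ _ ?_⟩
    calc y ^ N * (w * m) = (u * γ) * m := by rw [hw]; ring
      _ = u * (γ * m) := by ring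
      _ = u * (y ^ t * w') := by rw [hw'eq]
      _ = y ^ t * (u * w') := by ring
      _ = y ^ t * (y ^ N * ρ) := by rw [hρ]
      _ = y ^ N * (y ^ t * ρ) := by ring
  -- Lemma C : multiplicativity
  have hLC : ∀ (N P : ℕ) (u v : R), (∀ γ ∈ J, y ^ N ∣ u * γ) → (∀ γ ∈ J, y ^ P ∣ v * γ) →
      ∀ γ ∈ J, y ^ (N + P) ∣ u * v * γ := by
    intro N P u v hu hv γ hγ
    obtain ⟨w, hw, hweq⟩ := hLB N u hu γ hγ
    obtain ⟨ρ, hρ⟩ := hv w hw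
    refine ⟨ρ, ?_⟩
    calc u * v * γ = v * (u * γ) := by ring
      _ = v * (y ^ N * w) := by rw [hweq]
      _ = y ^ N * (v * w) := by ring
      _ = y ^ N * (y ^ P * ρ) := by rw [hρ]
      _ = y ^ (N + P) * ρ := by rw [pow_add]; ring
  -- powers
  have hLP : ∀ (u : R), (∀ γ ∈ J, y ^ t ∣ u * γ) →
      ∀ s : ℕ, ∀ γ ∈ J, y ^ (t * (s + 1)) ∣ u ^ (s + 1) * γ := by
    intro u hu s
    induction s with
    | zero => intro γ hγ; simpa using hu γ hγ
    | succ s ih =>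
        intro γ hγ
        have := hLC (t * (s + 1)) t (u ^ (s + 1)) u ih hu γ hγ
        have harith : t * (s + 1) + t = t * (s + 1 + 1) := by ring
        have hpow : u ^ (s + 1) * u = u ^ (s + 1 + 1) := by ring
        rw [harith] at this
        rwa [show u ^ (s + 1 + 1) * γ = u ^ (s + 1) * u * γ from by rw [← hpow]] 
  -- y^t ∈ J
  have hytJ : y ^ t ∈ J := by
    rw [hJmem]
    exact fun m _ => ⟨m, rfl⟩
  -- now prove the two inclusions
  apply le_antisymm
  · -- easy inclusion
    intro x hx
    rw [hJ'mem]
    intro γ hγ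
    obtain ⟨w, hw⟩ := (hJmem γ).1 hγ x hx
    exact ⟨w, by rw [mul_comm x γ]; exact hw⟩
  · -- hard inclusion
    intro x hx
    rw [← DirectSum.sum_support_decompose 𝒜 x]
    apply Ideal.sum_mem
    intro i _
    have hxi : (DirectSum.decompose 𝒜 x i : R) ∈ 𝒜 i := SetLike.coe_mem _
    rcases lt_or_ge i 0 with hi0 | hi0
    · have h0 := (Submodule.eq_bot_iff _).1 (hneg i hi0) _ hxi
      rw [h0]; exact Ideal.zero_mem _
    rcases le_or_gt (t : ℤ) i with hit | hit
    · -- degree ≥ t : automatic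
      have h1 : (DirectSum.decompose 𝒜 x i : R) ∈ 𝔪 ^ i.toNat := by
        apply hAm i.toNat
        have : ((i.toNat : ℕ) : ℤ) = i := by omega
        rwa [this]
      exact Ideal.pow_le_pow_right (by omega) h1
    · -- degree < t : must vanish
      set ξ : R := (DirectSum.decompose 𝒜 x i : R) with hξ
      have hξJ' : ξ ∈ Submodule.colon Q J := hJ'hom i hx
      have hξdvd : ∀ γ ∈ J, y ^ t ∣ ξ * γ := (hJ'mem ξ).1 hξJ'
      by_cases hξ0 : ξ = 0
      · rw [hξ0]; exact Ideal.zero_mem _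
      exfalso
      -- ξ is homogeneous of degree i with 0 ≤ i < t ; take m = t + 1 powers
      have hm1 : t ≥ 1 := by omega
      obtain ⟨ρ, hρ⟩ := hLP ξ hξdvd t (y ^ t) hytJ
      -- ξ^(t+1) * y^t ∈ (y^(t(t+1))) ⊆ 𝔪^(t(t+1))
      set v : R := ξ ^ (t + 1) * y ^ t with hv
      have hvmem : v ∈ 𝔪 ^ (t * (t + 1)) := by
        rw [hρ]
        exact Ideal.mul_mem_right ρ _ (Ideal.pow_mem_pow hy𝔪 _)
      have hvdeg : v ∈ 𝒜 ((t + 1 : ℕ) • i + (t : ℤ)) := by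
        exact SetLike.mul_mem_graded (SetLike.pow_mem_graded (t + 1) hxi) (hyt𝒜 t)
      have hdeglt : ((t + 1 : ℕ) • i + (t : ℤ)) < ((t * (t + 1) : ℕ) : ℤ) := by
        have h1 : (t + 1 : ℕ) • i = ((t : ℤ) + 1) * i := by push_cast [nsmul_eq_mul]; ring
        rw [h1]
        push_cast
        nlinarith [hit, hi0]
      have hv0 : v = 0 := by
        have hproj := hlow (t * (t + 1)) hvmem _ hdeglt
        rw [GradedRing.proj_apply, DirectSum.decompose_of_mem_same 𝒜 hvdeg] at hproj
        exact hproj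
      have hξpow0 : ξ ^ (t + 1) = 0 := by
        have := (hynzdN t).2 (ξ ^ (t + 1)) (by rw [← hv0, hv])
        exact this
      exact hξ0 (IsNilpotent.eq_zero ⟨t + 1, hξpow0⟩)
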